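/- Let X be a compact metric space, F : X ≃ₜ X a homeomorphism, and U ⊆ X an open set with F '' (closure U) ⊆ U. Then the maximal attractor A = ⋂_{n≥0} F^[n] '' (closure U) is Lyapunov stable for F: for every open set V with A ⊆ V there exists an open set W with A ⊆ W such that F^[n](x) ∈ V for every x ∈ W and every n ≥ 0. -/

import Mathlib

open Set Function Filter Topology

/-- Lyapunov stability of a set `K` for the map `F`. -/
def IsLyapunovStable {X : Type*} [TopologicalSpace X] (F : X → X) (K : Set X) : Prop :=
  ∀ V : Set X, IsOpen V → K ⊆ V →
    ∃ W : Set X, IsOpen W ∧ K ⊆ W ∧ ∀ x ∈ W, ∀ n : ℕ, F^[n] x ∈ V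

/-- The maximal attractor of a trapping region is Lyapunov stable. -/
theorem stmt3 {X : Type*} [MetricSpace X] [CompactSpace X]
    (F : X ≃ₜ X) (U : Set X) (hU : IsOpen U) (htrap : (⇑F) '' closure U ⊆ U) :
    IsLyapunovStable (⇑F) (⋂ n : ℕ, (⇑F)^[n] '' closure U) := by
  intro V hV hAV
  set K : ℕ → Set X := fun n => (⇑F)^[n] '' closure U with hK
  have hKsucc : ∀ n, K (n + 1) ⊆ K n := by
    intro n
    have h1 : K (n + 1) = (⇑F)^[n] '' ((⇑F) '' closure U) := by
      simp only [hK, Function.iterate_succ, Set.image_comp]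
    rw [h1]
    refine (Set.image_mono  (htrap.trans subset_closure))
  have hKanti : Antitone K := antitone_nat_of_succ_le hKsucc
  have hKcomp : ∀ n, IsCompact (K n) :=
    fun n => (isClosed_closure.isCompact).image
      (F.continuous.iterate n)
  have hKclosed : ∀ n, IsClosed (K n) := fun n => (hKcomp n).isClosed
  -- find N with K N ⊆ V
  have hcompl : IsCompact Vᶜ := (hV.isClosed_compl).isCompact
  have hempty : (Vᶜ ∩ ⋂ n, K n) = ∅ := by
    rw [Set.eq_empty_iff_forall_notMem]
    rintro x ⟨hxc, hxK⟩
    exact hxc (hAV hxK)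
  obtain ⟨N, hN⟩ := hcompl.elim_directed_family_closed K hKclosed hempty
    (hKanti.directed_ge)
  have hKNV : K N ⊆ V := by
    intro x hx
    by_contra hxc
    exact (Set.eq_empty_iff_forall_notMem.mp hN x) ⟨hxc, hx⟩
  -- W = F^[N] '' U
  refine ⟨(⇑F)^[N] '' U, ?_, ?_, ?_⟩
  · have hom : ∀ m : ℕ, IsOpenMap ((⇑F)^[m]) := by
      intro m
      induction m with
      | zero => exact IsOpenMap.id
      | succ n ih => rw [Function.iterate_succ]; exact ih.comp F.isOpenMap
    exact hom N U hU
  · -- A ⊆ K (N+1) ⊆ F^[N] '' U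
    refine (Set.iInter_subset K (N + 1)).trans ?_
    have h1 : K (N + 1) = (⇑F)^[N] '' ((⇑F) '' closure U) := by
      simp only [hK, Function.iterate_succ, Set.image_comp]
    rw [h1]
    exact Set.image_mono  htrap
  · -- forward invariance into V
    have hWinv : ∀ x ∈ (⇑F)^[N] '' U, F x ∈ (⇑F)^[N] '' U := by
      rintro _ ⟨u, hu, rfl⟩
      refine ⟨F u, htrap ⟨u, subset_closure hu, rfl⟩, ?_⟩
      rw [← Function.iterate_succ_apply, Function.iterate_succ_apply']
    have hWV : (⇑F)^[N] '' U ⊆ V :=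
      (Set.image_mono  subset_closure).trans hKNV
    intro x hx n
    induction n with
    | zero => exact hWV hx
    | succ n ih =>
      have : ∀ m : ℕ, (⇑F)^[m] x ∈ (⇑F)^[N] '' U := by
        intro m
        induction m with
        | zero => exact hx
        | succ m ihm => rw [Function.iterate_succ_apply']; exact hWinv _ ihm
      exact hWV (this (n+1))
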